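/- In the DAHA H_k (k ≥ 2) the following relation holds: Y_1X_1 = q·X_1Y_1·T_1T_2⋯T_{k−2}T_{k−1}²T_{k−2}⋯T_2T_1, and equivalently Y_1X_1 = q·X_1Y_1·(1 + h·∑_{i=1}^{k−1} T_1⋯T_{i−1}T_iT_{i−1}⋯T_1), where T_1⋯T_{i−1}T_iT_{i−1}⋯T_1 denotes the palindromic product (equal to T_1 when i = 1). -/

import Mathlib

/-!
The double affine Hecke algebra `H_k` of type `GL_k` over `K' = ℚ(h, q)`.
We realize `ℚ(h, q)` as `RatFunc (RatFunc ℚ)`, with `h` the inner variable and `q` the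
outer one.  Generator indices are 0-based: the Lean index `i` of a `T`-generator
(`i : Fin (k-1)`) stands for the paper index `i + 1 ∈ {1, …, k-1}`, and the Lean index `j`
of an `X`- or `Y`-generator (`j : Fin k`) stands for the paper index `j + 1 ∈ {1, …, k}`.
-/

noncomputable section

abbrev K2 : Type := RatFunc (RatFunc ℚ)

/-- The variable `h` of `ℚ(h, q)`. -/
def hvar : K2 := RatFunc.C RatFunc.X

/-- The variable `q` of `ℚ(h, q)`. -/
def qvar : K2 := RatFunc.X

/-- Generators of the DAHA `H_k`. -/
inductive DGen (k : ℕ) : Type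
  | T : Fin (k - 1) → DGen k
  | T' : Fin (k - 1) → DGen k
  | X : Fin k → DGen k
  | X' : Fin k → DGen k
  | Y : Fin k → DGen k
  | Y' : Fin k → DGen k

open FreeAlgebra in
/-- The defining relations of `H_k`. -/
inductive DRel (k : ℕ) : FreeAlgebra K2 (DGen k) → FreeAlgebra K2 (DGen k) → Prop
  | TT' (i : Fin (k - 1)) : DRel k (ι K2 (DGen.T i) * ι K2 (DGen.T' i)) 1
  | T'T (i : Fin (k - 1)) : DRel k (ι K2 (DGen.T' i) * ι K2 (DGen.T i)) 1
  | XX' (i : Fin k) : DRel k (ι K2 (DGen.X i) * ι K2 (DGen.X' i)) 1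
  | X'X (i : Fin k) : DRel k (ι K2 (DGen.X' i) * ι K2 (DGen.X i)) 1
  | YY' (i : Fin k) : DRel k (ι K2 (DGen.Y i) * ι K2 (DGen.Y' i)) 1
  | Y'Y (i : Fin k) : DRel k (ι K2 (DGen.Y' i) * ι K2 (DGen.Y i)) 1
  | TminusT' (i : Fin (k - 1)) :
      DRel k (ι K2 (DGen.T i) - ι K2 (DGen.T' i)) (algebraMap K2 _ hvar)
  | Tcomm (i j : Fin (k - 1)) (hij : (i : ℕ) + 1 < j ∨ (j : ℕ) + 1 < i) :
      DRel k (ι K2 (DGen.T i) * ι K2 (DGen.T j)) (ι K2 (DGen.T j) * ι K2 (DGen.T i))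
  | braid (i j : Fin (k - 1)) (hij : (j : ℕ) = (i : ℕ) + 1) :
      DRel k (ι K2 (DGen.T i) * ι K2 (DGen.T j) * ι K2 (DGen.T i))
        (ι K2 (DGen.T j) * ι K2 (DGen.T i) * ι K2 (DGen.T j))
  | TXT (i : Fin (k - 1)) (a b : Fin k) (ha : (a : ℕ) = (i : ℕ)) (hb : (b : ℕ) = (i : ℕ) + 1) :
      DRel k (ι K2 (DGen.T' i) * ι K2 (DGen.X a) * ι K2 (DGen.T' i)) (ι K2 (DGen.X b))
  | TX (i : Fin (k - 1)) (a : Fin k) (h1 : (a : ℕ) ≠ (i : ℕ)) (h2 : (a : ℕ) ≠ (i : ℕ) + 1) :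
      DRel k (ι K2 (DGen.T i) * ι K2 (DGen.X a)) (ι K2 (DGen.X a) * ι K2 (DGen.T i))
  | XX (a b : Fin k) :
      DRel k (ι K2 (DGen.X a) * ι K2 (DGen.X b)) (ι K2 (DGen.X b) * ι K2 (DGen.X a))
  | TYT (i : Fin (k - 1)) (a b : Fin k) (ha : (a : ℕ) = (i : ℕ)) (hb : (b : ℕ) = (i : ℕ) + 1) :
      DRel k (ι K2 (DGen.T i) * ι K2 (DGen.Y a) * ι K2 (DGen.T i)) (ι K2 (DGen.Y b))
  | TY (i : Fin (k - 1)) (a : Fin k) (h1 : (a : ℕ) ≠ (i : ℕ)) (h2 : (a : ℕ) ≠ (i : ℕ) + 1) :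
      DRel k (ι K2 (DGen.T i) * ι K2 (DGen.Y a)) (ι K2 (DGen.Y a) * ι K2 (DGen.T i))
  | YY (a b : Fin k) :
      DRel k (ι K2 (DGen.Y a) * ι K2 (DGen.Y b)) (ι K2 (DGen.Y b) * ι K2 (DGen.Y a))
  | cross (i : Fin (k - 1)) (a b : Fin k) (hi : (i : ℕ) = 0) (ha : (a : ℕ) = 0)
      (hb : (b : ℕ) = 1) :
      DRel k (ι K2 (DGen.Y a) * ι K2 (DGen.T i) * ι K2 (DGen.X a))
        (ι K2 (DGen.X b) * ι K2 (DGen.Y a) * ι K2 (DGen.T i))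
  | det (a : Fin k) (ha : (a : ℕ) = 0) :
      DRel k (ι K2 (DGen.Y a) * ((List.finRange k).map (fun j => ι K2 (DGen.X j))).prod)
        (algebraMap K2 _ qvar *
          ((List.finRange k).map (fun j => ι K2 (DGen.X j))).prod * ι K2 (DGen.Y a))

/-- The double affine Hecke algebra `H_k`. -/
abbrev Hk (k : ℕ) : Type := RingQuot (DRel k)

/-- The image in `H_k` of a generator. -/
def dgen {k : ℕ} (g : DGen k) : Hk k := RingQuot.mkAlgHom K2 (DRel k) (FreeAlgebra.ι K2 g)

/-- The generator `T_{i+1}` (paper index) of `H_k`, as a total function of `i : ℕ`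
(with junk value `1` out of range). -/
def TgN (k i : ℕ) : Hk k := if h : i < k - 1 then dgen (DGen.T ⟨i, h⟩) else 1

/-- The generator `X_{i+1}` (paper index) of `H_k`. -/
def XgN (k i : ℕ) : Hk k := if h : i < k then dgen (DGen.X ⟨i, h⟩) else 1

/-- The generator `Y_{i+1}` (paper index) of `H_k`. -/
def YgN (k i : ℕ) : Hk k := if h : i < k then dgen (DGen.Y ⟨i, h⟩) else 1

/-! ### Auxiliary development -/

namespace DAHAAux

/-- The inverse `T`-generators, as a total function. -/
def TpN (k i : ℕ) : Hk k := if h : i < k - 1 then dgen (DGen.T' ⟨i, h⟩) else 1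

/-- The inverse `X`-generators, as a total function. -/
def XiN (k i : ℕ) : Hk k := if h : i < k then dgen (DGen.X' ⟨i, h⟩) else 1

/-- The image of `h` in `H_k`. -/
abbrev hA (k : ℕ) : Hk k := algebraMap K2 (Hk k) hvar

/-- The image of `q` in `H_k`. -/
abbrev qA (k : ℕ) : Hk k := algebraMap K2 (Hk k) qvar

lemma rel {k : ℕ} {a b : FreeAlgebra K2 (DGen k)} (h : DRel k a b) :
    RingQuot.mkAlgHom K2 (DRel k) a = RingQuot.mkAlgHom K2 (DRel k) b :=
  RingQuot.mkAlgHom_rel _ h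

lemma central_h {k : ℕ} (x : Hk k) : x * hA k = hA k * x := (Algebra.commutes _ _).symm

/-- `T i * T' i = 1`. -/
lemma T_Tp (k i : ℕ) : TgN k i * TpN k i = 1 := by
  unfold TgN TpN
  by_cases h : i < k - 1
  · rw [dif_pos h, dif_pos h]
    simpa only [dgen, ← map_mul, map_one] using rel (DRel.TT' ⟨i, h⟩)
  · rw [dif_neg h, dif_neg h, one_mul]

/-- `T' i * T i = 1`. -/
lemma Tp_T (k i : ℕ) : TpN k i * TgN k i = 1 := by
  unfold TgN TpN
  by_cases h : i < k - 1
  · rw [dif_pos h, dif_pos h]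
    simpa only [dgen, ← map_mul, map_one] using rel (DRel.T'T ⟨i, h⟩)
  · rw [dif_neg h, dif_neg h, one_mul]

/-- `X a * X' a = 1`. -/
lemma X_Xi (k a : ℕ) : XgN k a * XiN k a = 1 := by
  unfold XgN XiN
  by_cases h : a < k
  · rw [dif_pos h, dif_pos h]
    simpa only [dgen, ← map_mul, map_one] using rel (DRel.XX' ⟨a, h⟩)
  · rw [dif_neg h, dif_neg h, one_mul]

lemma T_sub_Tp (k i : ℕ) (h : i < k - 1) : TgN k i - TpN k i = hA k := by
  unfold TgN TpN
  rw [dif_pos h, dif_pos h]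
  have h1 := rel (k := k) (DRel.TminusT' ⟨i, h⟩)
  rw [map_sub, AlgHom.commutes] at h1
  exact h1

/-- Quadratic relation `T i * T i = 1 + h * T i`. -/
lemma Tsq (k i : ℕ) (h : i < k - 1) : TgN k i * TgN k i = 1 + hA k * TgN k i := by
  have hs : TpN k i = TgN k i - hA k := by
    rw [← T_sub_Tp k i h, sub_sub_cancel]
  calc TgN k i * TgN k i = TgN k i * (TpN k i + hA k) := by rw [hs, sub_add_cancel]
    _ = 1 + hA k * TgN k i := by
        rw [mul_add, T_Tp, central_h]

/-- Distant `T`'s commute (total version). -/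
lemma Tcomm (k : ℕ) {i j : ℕ} (hij : i + 1 < j ∨ j + 1 < i) :
    TgN k i * TgN k j = TgN k j * TgN k i := by
  unfold TgN
  by_cases h1 : i < k - 1
  · by_cases h2 : j < k - 1
    · rw [dif_pos h1, dif_pos h2]
      simpa only [dgen, ← map_mul] using rel (DRel.Tcomm ⟨i, h1⟩ ⟨j, h2⟩ hij)
    · rw [dif_neg h2]; simp
  · rw [dif_neg h1]; simp

/-- Braid relation. -/
lemma Tbraid (k i : ℕ) (h : i + 1 < k - 1) :
    TgN k i * TgN k (i + 1) * TgN k i = TgN k (i + 1) * TgN k i * TgN k (i + 1) := by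
  have hi : i < k - 1 := by omega
  unfold TgN
  rw [dif_pos hi, dif_pos h]
  simpa only [dgen, ← map_mul] using rel (DRel.braid ⟨i, hi⟩ ⟨i + 1, h⟩ rfl)

/-- `T' i * X i * T' i = X (i+1)`. -/
lemma TpXTp (k i : ℕ) (h : i < k - 1) :
    TpN k i * XgN k i * TpN k i = XgN k (i + 1) := by
  have hik : i < k := by omega
  have hik1 : i + 1 < k := by omega
  unfold TpN XgN
  rw [dif_pos h, dif_pos hik, dif_pos hik1]
  simpa only [dgen, ← map_mul] using rel (DRel.TXT ⟨i, h⟩ ⟨i, hik⟩ ⟨i + 1, hik1⟩ rfl rfl)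

/-- `T i` commutes with `X a` for `a ∉ {i, i+1}` (total version). -/
lemma TXcomm (k : ℕ) {i a : ℕ} (h1 : a ≠ i) (h2 : a ≠ i + 1) :
    TgN k i * XgN k a = XgN k a * TgN k i := by
  unfold TgN XgN
  by_cases hi : i < k - 1
  · by_cases ha : a < k
    · rw [dif_pos hi, dif_pos ha]
      simpa only [dgen, ← map_mul] using rel (DRel.TX ⟨i, hi⟩ ⟨a, ha⟩ h1 h2)
    · rw [dif_neg ha]; simp
  · rw [dif_neg hi]; simp

/-- `X`'s commute (total version). -/
lemma XXcomm (k a b : ℕ) : XgN k a * XgN k b = XgN k b * XgN k a := by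
  unfold XgN
  by_cases ha : a < k
  · by_cases hb : b < k
    · rw [dif_pos ha, dif_pos hb]
      simpa only [dgen, ← map_mul] using rel (DRel.XX ⟨a, ha⟩ ⟨b, hb⟩)
    · rw [dif_neg hb]; simp
  · rw [dif_neg ha]; simp

/-- `T i` commutes with `Y 0` for `i ≥ 1` (total version). -/
lemma TYcomm (k : ℕ) {i : ℕ} (hi : 1 ≤ i) : TgN k i * YgN k 0 = YgN k 0 * TgN k i := by
  unfold TgN YgN
  by_cases h1 : i < k - 1
  · have h0 : 0 < k := by omega
    rw [dif_pos h1, dif_pos h0]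
    simpa only [dgen, ← map_mul] using
      rel (DRel.TY ⟨i, h1⟩ ⟨0, h0⟩ (show (0 : ℕ) ≠ i by omega) (show (0 : ℕ) ≠ i + 1 by omega))
  · rw [dif_neg h1]; simp

/-- The cross relation. -/
lemma crossRel (k : ℕ) (hk : 2 ≤ k) :
    YgN k 0 * TgN k 0 * XgN k 0 = XgN k 1 * (YgN k 0 * TgN k 0) := by
  have h0 : (0 : ℕ) < k - 1 := by omega
  have h0k : (0 : ℕ) < k := by omega
  have h1k : (1 : ℕ) < k := by omega
  unfold TgN XgN YgN
  rw [dif_pos h0, dif_pos h0k, dif_pos h0k, dif_pos h1k]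
  simpa only [dgen, map_mul, mul_assoc] using
    rel (DRel.cross ⟨0, h0⟩ ⟨0, h0k⟩ ⟨1, h1k⟩ rfl rfl rfl)

/-- General cancellation helper. -/
lemma cancel_left {k : ℕ} {t tp a b : Hk k} (h1 : tp * t = 1) (h : t * a = t * b) : a = b := by
  calc a = tp * t * a := by rw [h1, one_mul]
    _ = tp * (t * a) := by rw [mul_assoc]
    _ = tp * (t * b) := by rw [h]
    _ = tp * t * b := by rw [mul_assoc]
    _ = b := by rw [h1, one_mul]

/-- Conjugation of a commutation relation by an inverse. -/
lemma conj_comm_inv {k : ℕ} {t tp x : Hk k} (h1 : t * tp = 1) (h2 : tp * t = 1)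
    (hc : t * x = x * t) : tp * x = x * tp := by
  calc tp * x = tp * x * (t * tp) := by rw [h1, mul_one]
    _ = tp * (x * t) * tp := by simp only [mul_assoc]
    _ = tp * (t * x) * tp := by rw [hc]
    _ = tp * t * (x * tp) := by simp only [mul_assoc]
    _ = x * tp := by rw [h2, one_mul]

lemma TpXcomm (k : ℕ) {i a : ℕ} (h1 : a ≠ i) (h2 : a ≠ i + 1) :
    TpN k i * XgN k a = XgN k a * TpN k i :=
  conj_comm_inv (T_Tp k i) (Tp_T k i) (TXcomm k h1 h2)

lemma TpYcomm (k : ℕ) {i : ℕ} (hi : 1 ≤ i) : TpN k i * YgN k 0 = YgN k 0 * TpN k i :=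
  conj_comm_inv (T_Tp k i) (Tp_T k i) (TYcomm k hi)

lemma TpTcomm (k : ℕ) {i j : ℕ} (hij : i + 1 < j ∨ j + 1 < i) :
    TpN k i * TgN k j = TgN k j * TpN k i :=
  conj_comm_inv (T_Tp k i) (Tp_T k i) (Tcomm k hij)

/-- `X i * T' i = T i * X (i+1)`. -/
lemma XTp (k i : ℕ) (h : i < k - 1) :
    XgN k i * TpN k i = TgN k i * XgN k (i + 1) := by
  calc XgN k i * TpN k i = TgN k i * TpN k i * (XgN k i * TpN k i) := by
        rw [T_Tp, one_mul]
    _ = TgN k i * (TpN k i * XgN k i * TpN k i) := by simp only [mul_assoc]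
    _ = TgN k i * XgN k (i + 1) := by rw [TpXTp k i h]

/-- `T' i * X i = X (i+1) * T i`. -/
lemma TpX (k i : ℕ) (h : i < k - 1) :
    TpN k i * XgN k i = XgN k (i + 1) * TgN k i := by
  calc TpN k i * XgN k i = TpN k i * XgN k i * (TpN k i * TgN k i) := by
        rw [Tp_T, mul_one]
    _ = TpN k i * XgN k i * TpN k i * TgN k i := by simp only [mul_assoc]
    _ = XgN k (i + 1) * TgN k i := by rw [TpXTp k i h]

/-- `X i = T i * (X (i+1) * T i)`. -/
lemma X_eq (k i : ℕ) (h : i < k - 1) :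
    XgN k i = TgN k i * (XgN k (i + 1) * TgN k i) := by
  calc XgN k i = TgN k i * TpN k i * XgN k i * (TpN k i * TgN k i) := by
        rw [T_Tp, Tp_T, one_mul, mul_one]
    _ = TgN k i * (TpN k i * XgN k i * TpN k i) * TgN k i := by simp only [mul_assoc]
    _ = TgN k i * XgN k (i + 1) * TgN k i := by rw [TpXTp k i h]
    _ = TgN k i * (XgN k (i + 1) * TgN k i) := by rw [mul_assoc]

/-! #### Products of generators -/

/-- Ascending product `T 0 * T 1 * ⋯ * T (n-1)`. -/
def AscT (k : ℕ) : ℕ → Hk k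
  | 0 => 1
  | n + 1 => AscT k n * TgN k n

/-- Descending product `T (n-1) * ⋯ * T 0`. -/
def DescT (k : ℕ) : ℕ → Hk k
  | 0 => 1
  | n + 1 => TgN k n * DescT k n

/-- The inverse of `DescT`: `T' 0 * T' 1 * ⋯ * T' (n-1)`. -/
def DescTp (k : ℕ) : ℕ → Hk k
  | 0 => 1
  | n + 1 => DescTp k n * TpN k n

/-- `X a * X (a+1) * ⋯ * X (a+n-1)`. -/
def Xp (k : ℕ) : ℕ → ℕ → Hk k
  | _, 0 => 1
  | a, n + 1 => XgN k a * Xp k (a + 1) n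

/-- The inverse of `Xp`. -/
def XpI (k : ℕ) : ℕ → ℕ → Hk k
  | _, 0 => 1
  | a, n + 1 => XpI k (a + 1) n * XiN k a

/-- `RR k m` is the element `R_{m+2} = T'_{m} ⋯ T'_1 T_0² T_1 ⋯ T_m` (0-based). -/
def RR (k : ℕ) : ℕ → Hk k
  | 0 => TgN k 0 * TgN k 0
  | m + 1 => TpN k (m + 1) * RR k m * TgN k (m + 1)

/-- `MM k b n = (RR b * X (b+1)) * (RR (b+1) * X (b+2)) * ⋯` (`n` factors). -/
def MM (k : ℕ) : ℕ → ℕ → Hk k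
  | _, 0 => 1
  | b, n + 1 => RR k b * XgN k (b + 1) * MM k (b + 1) n

/-- `Kn k n = T'_0 ⋯ T'_{n-1} T_n² T_{n-1} ⋯ T_0`. -/
def Kn (k n : ℕ) : Hk k := DescTp k n * (TgN k n * (TgN k n * DescT k n))

/-- The long palindrome with squared middle. -/
def Cpal (k n : ℕ) : Hk k := AscT k n * DescT k n

lemma Xp_snoc (k : ℕ) : ∀ n a, Xp k a (n + 1) = Xp k a n * XgN k (a + n)
  | 0, a => by simp [Xp]
  | n + 1, a => by
    rw [Xp, Xp_snoc k n (a + 1), Xp]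
    rw [← mul_assoc, ← Xp]
    have : a + 1 + n = a + (n + 1) := by omega
    rw [this]

lemma Xp_XpI (k : ℕ) : ∀ n a, Xp k a n * XpI k a n = 1
  | 0, _ => by simp [Xp, XpI]
  | n + 1, a => by
    rw [Xp, XpI]
    calc XgN k a * Xp k (a + 1) n * (XpI k (a + 1) n * XiN k a)
        = XgN k a * (Xp k (a + 1) n * XpI k (a + 1) n) * XiN k a := by
          simp only [mul_assoc]
      _ = XgN k a * XiN k a := by rw [Xp_XpI k n (a + 1), mul_one]
      _ = 1 := X_Xi k a

lemma DescT_DescTp (k : ℕ) : ∀ n, DescT k n * DescTp k n = 1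
  | 0 => by simp [DescT, DescTp]
  | n + 1 => by
    rw [DescT, DescTp]
    calc TgN k n * DescT k n * (DescTp k n * TpN k n)
        = TgN k n * (DescT k n * DescTp k n) * TpN k n := by simp only [mul_assoc]
      _ = TgN k n * TpN k n := by rw [DescT_DescTp k n, mul_one]
      _ = 1 := T_Tp k n

lemma Xp_comm_T (k : ℕ) : ∀ n a j, a + n ≤ j → Xp k a n * TgN k j = TgN k j * Xp k a n
  | 0, a, j, _ => by simp [Xp]
  | n + 1, a, j, h => by
    rw [Xp]
    calc XgN k a * Xp k (a + 1) n * TgN k j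
        = XgN k a * (Xp k (a + 1) n * TgN k j) := by rw [mul_assoc]
      _ = XgN k a * (TgN k j * Xp k (a + 1) n) := by
          rw [Xp_comm_T k n (a + 1) j (by omega)]
      _ = (XgN k a * TgN k j) * Xp k (a + 1) n := by rw [mul_assoc]
      _ = TgN k j * (XgN k a * Xp k (a + 1) n) := by
          rw [← TXcomm k (by omega) (by omega), mul_assoc]

lemma Xp_comm_Tp (k : ℕ) : ∀ n a j, a + n ≤ j → Xp k a n * TpN k j = TpN k j * Xp k a n
  | 0, a, j, _ => by simp [Xp]
  | n + 1, a, j, h => by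
    rw [Xp]
    calc XgN k a * Xp k (a + 1) n * TpN k j
        = XgN k a * (Xp k (a + 1) n * TpN k j) := by rw [mul_assoc]
      _ = XgN k a * (TpN k j * Xp k (a + 1) n) := by
          rw [Xp_comm_Tp k n (a + 1) j (by omega)]
      _ = (XgN k a * TpN k j) * Xp k (a + 1) n := by rw [mul_assoc]
      _ = TpN k j * (XgN k a * Xp k (a + 1) n) := by
          rw [← TpXcomm k (by omega) (by omega), mul_assoc]

lemma X_comm_RR (k : ℕ) : ∀ m b, m + 2 ≤ b → XgN k b * RR k m = RR k m * XgN k b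
  | 0, b, h => by
    rw [RR]
    have hc : XgN k b * TgN k 0 = TgN k 0 * XgN k b :=
      (TXcomm k (by omega) (by omega)).symm
    calc XgN k b * (TgN k 0 * TgN k 0)
        = XgN k b * TgN k 0 * TgN k 0 := by rw [mul_assoc]
      _ = TgN k 0 * XgN k b * TgN k 0 := by rw [hc]
      _ = TgN k 0 * (XgN k b * TgN k 0) := by rw [mul_assoc]
      _ = TgN k 0 * (TgN k 0 * XgN k b) := by rw [hc]
      _ = TgN k 0 * TgN k 0 * XgN k b := by rw [mul_assoc]
  | m + 1, b, h => by
    rw [RR]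
    calc XgN k b * (TpN k (m + 1) * RR k m * TgN k (m + 1))
        = (XgN k b * TpN k (m + 1)) * RR k m * TgN k (m + 1) := by simp only [mul_assoc]
      _ = TpN k (m + 1) * (XgN k b * RR k m) * TgN k (m + 1) := by
          rw [(show XgN k b * TpN k (m + 1) = TpN k (m + 1) * XgN k b from
            (TpXcomm k (by omega) (by omega)).symm)]
          simp only [mul_assoc]
      _ = TpN k (m + 1) * (RR k m * XgN k b) * TgN k (m + 1) := by
          rw [X_comm_RR k m b (by omega)]
      _ = TpN k (m + 1) * RR k m * (XgN k b * TgN k (m + 1)) := by simp only [mul_assoc]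
      _ = TpN k (m + 1) * RR k m * TgN k (m + 1) * XgN k b := by
          rw [(show XgN k b * TgN k (m + 1) = TgN k (m + 1) * XgN k b from
            (TXcomm k (by omega) (by omega)).symm)]
          simp only [mul_assoc]

lemma DescTp_comm_T (k : ℕ) : ∀ n j, n < j → TgN k j * DescTp k n = DescTp k n * TgN k j
  | 0, j, _ => by simp [DescTp]
  | n + 1, j, h => by
    rw [DescTp]
    calc TgN k j * (DescTp k n * TpN k n)
        = (TgN k j * DescTp k n) * TpN k n := by rw [mul_assoc]
      _ = DescTp k n * (TgN k j * TpN k n) := by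
          rw [DescTp_comm_T k n j (by omega), mul_assoc]
      _ = DescTp k n * TpN k n * TgN k j := by
          rw [← TpTcomm k (Or.inl (by omega)), mul_assoc]

lemma DescT_comm_Tp (k : ℕ) : ∀ n j, n < j → DescT k n * TpN k j = TpN k j * DescT k n
  | 0, j, _ => by simp [DescT]
  | n + 1, j, h => by
    rw [DescT]
    calc TgN k n * DescT k n * TpN k j
        = TgN k n * (DescT k n * TpN k j) := by rw [mul_assoc]
      _ = (TgN k n * TpN k j) * DescT k n := by
          rw [DescT_comm_Tp k n j (by omega), mul_assoc]
      _ = TpN k j * (TgN k n * DescT k n) := by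
          rw [← TpTcomm k (Or.inr (by omega : n + 1 < j)), mul_assoc]

/-- The braid-derived identity `T (i+1) * T i * T' (i+1) = T' i * T (i+1) * T i`. -/
lemma braid_conj (k i : ℕ) (h : i + 1 < k - 1) :
    TgN k (i + 1) * TgN k i * TpN k (i + 1) = TpN k i * TgN k (i + 1) * TgN k i := by
  refine cancel_left (Tp_T k i) ?_
  calc TgN k i * (TgN k (i + 1) * TgN k i * TpN k (i + 1))
      = TgN k i * TgN k (i + 1) * TgN k i * TpN k (i + 1) := by simp only [mul_assoc]
    _ = TgN k (i + 1) * TgN k i * (TgN k (i + 1) * TpN k (i + 1)) := by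
        rw [Tbraid k i h]; simp only [mul_assoc]
    _ = TgN k (i + 1) * TgN k i := by rw [T_Tp, mul_one]
    _ = TgN k i * TpN k i * (TgN k (i + 1) * TgN k i) := by rw [T_Tp, one_mul]
    _ = TgN k i * (TpN k i * TgN k (i + 1) * TgN k i) := by simp only [mul_assoc]

/-- The quadratic braid identity `T (i+1) * T i ² * T' (i+1) = T' i * T (i+1) ² * T i`. -/
lemma BID (k i : ℕ) (h : i + 1 < k - 1) :
    TgN k (i + 1) * (TgN k i * TgN k i) * TpN k (i + 1) =
      TpN k i * (TgN k (i + 1) * TgN k (i + 1)) * TgN k i := by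
  have hi : i < k - 1 := by omega
  rw [Tsq k i hi, Tsq k (i + 1) h]
  rw [mul_add, add_mul, mul_add, add_mul]
  rw [mul_one, mul_one, T_Tp, Tp_T]
  congr 1
  calc TgN k (i + 1) * (hA k * TgN k i) * TpN k (i + 1)
      = TgN k (i + 1) * hA k * TgN k i * TpN k (i + 1) := by simp only [mul_assoc]
    _ = hA k * TgN k (i + 1) * TgN k i * TpN k (i + 1) := by rw [central_h]
    _ = hA k * (TgN k (i + 1) * TgN k i * TpN k (i + 1)) := by simp only [mul_assoc]
    _ = hA k * (TpN k i * TgN k (i + 1) * TgN k i) := by rw [braid_conj k i h]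
    _ = hA k * TpN k i * TgN k (i + 1) * TgN k i := by simp only [mul_assoc]
    _ = TpN k i * hA k * TgN k (i + 1) * TgN k i := by rw [central_h]
    _ = TpN k i * (hA k * TgN k (i + 1)) * TgN k i := by simp only [mul_assoc]

/-- Step lemma for `Kn`. -/
lemma Kn_step (k n : ℕ) (h : n + 1 < k - 1) :
    TgN k (n + 1) * Kn k n * TpN k (n + 1) = Kn k (n + 1) := by
  rw [Kn, Kn, DescTp, DescT]
  calc TgN k (n + 1) * (DescTp k n * (TgN k n * (TgN k n * DescT k n))) * TpN k (n + 1)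
      = DescTp k n * (TgN k (n + 1) * (TgN k n * TgN k n) * (DescT k n * TpN k (n + 1))) := by
        rw [← mul_assoc, DescTp_comm_T k n (n + 1) (by omega)]; simp only [mul_assoc]
    _ = DescTp k n * (TgN k (n + 1) * (TgN k n * TgN k n) * TpN k (n + 1) * DescT k n) := by
        rw [DescT_comm_Tp k n (n + 1) (by omega)]; simp only [mul_assoc]
    _ = DescTp k n * (TpN k n * (TgN k (n + 1) * TgN k (n + 1)) * TgN k n * DescT k n) := by
        rw [BID k n h]
    _ = DescTp k n * TpN k n * (TgN k (n + 1) * (TgN k (n + 1) * (TgN k n * DescT k n))) := by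
        simp only [mul_assoc]

/-- `Cpal` absorbs `Kn`. -/
lemma Cpal_Kn (k n : ℕ) : Cpal k n * Kn k n = Cpal k (n + 1) := by
  rw [Cpal, Cpal, Kn, AscT, DescT]
  calc AscT k n * DescT k n * (DescTp k n * (TgN k n * (TgN k n * DescT k n)))
      = AscT k n * (DescT k n * DescTp k n) * (TgN k n * (TgN k n * DescT k n)) := by
        simp only [mul_assoc]
    _ = AscT k n * TgN k n * (TgN k n * DescT k n) := by
        rw [DescT_DescTp k n, mul_one]; simp only [mul_assoc]

/-! #### The main inductions -/

/-- `X (m+1) * Y = Y * (R * X (m+1))`, commuting `Y` past the other `X`'s. -/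
lemma FactE (k : ℕ) : ∀ m, m + 1 < k →
    XgN k (m + 1) * YgN k 0 = YgN k 0 * (RR k m * XgN k (m + 1))
  | 0, hm => by
    have hk : 2 ≤ k := by omega
    have h0 : (0 : ℕ) < k - 1 := by omega
    have hx : XgN k 0 = TgN k 0 * (XgN k 1 * TgN k 0) := by simpa using X_eq k 0 h0
    calc XgN k 1 * YgN k 0
        = XgN k 1 * (YgN k 0 * TgN k 0) * TpN k 0 := by
          rw [mul_assoc, mul_assoc, T_Tp, mul_one]
      _ = YgN k 0 * TgN k 0 * XgN k 0 * TpN k 0 := by rw [← crossRel k hk]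
      _ = YgN k 0 * TgN k 0 * (TgN k 0 * (XgN k 1 * TgN k 0)) * TpN k 0 := by rw [hx]
      _ = YgN k 0 * (TgN k 0 * TgN k 0 * XgN k 1) * (TgN k 0 * TpN k 0) := by
          simp only [mul_assoc]
      _ = YgN k 0 * (RR k 0 * XgN k 1) := by rw [T_Tp, mul_one, RR]
  | m + 1, hm => by
    have h1 : m + 1 < k - 1 := by omega
    calc XgN k (m + 1 + 1) * YgN k 0
        = TpN k (m + 1) * XgN k (m + 1) * TpN k (m + 1) * YgN k 0 := by
          rw [TpXTp k (m + 1) h1]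
      _ = TpN k (m + 1) * XgN k (m + 1) * (TpN k (m + 1) * YgN k 0) := by
          simp only [mul_assoc]
      _ = TpN k (m + 1) * XgN k (m + 1) * (YgN k 0 * TpN k (m + 1)) := by
          rw [TpYcomm k (by omega)]
      _ = TpN k (m + 1) * (XgN k (m + 1) * YgN k 0) * TpN k (m + 1) := by
          simp only [mul_assoc]
      _ = TpN k (m + 1) * (YgN k 0 * (RR k m * XgN k (m + 1))) * TpN k (m + 1) := by
          rw [FactE k m (by omega)]
      _ = TpN k (m + 1) * YgN k 0 * (RR k m * (XgN k (m + 1) * TpN k (m + 1))) := by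
          simp only [mul_assoc]
      _ = YgN k 0 * TpN k (m + 1) * (RR k m * (TgN k (m + 1) * XgN k (m + 1 + 1))) := by
          rw [TpYcomm k (by omega), XTp k (m + 1) h1]
      _ = YgN k 0 * (RR k (m + 1) * XgN k (m + 1 + 1)) := by
          rw [RR]; simp only [mul_assoc]

/-- Commuting `Y` past a whole block of `X`'s. -/
lemma ChainF (k : ℕ) : ∀ n b, b + n < k →
    Xp k (b + 1) n * YgN k 0 = YgN k 0 * MM k b n
  | 0, b, _ => by simp [Xp, MM]
  | n + 1, b, h => by
    rw [Xp, MM]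
    calc XgN k (b + 1) * Xp k (b + 1 + 1) n * YgN k 0
        = XgN k (b + 1) * (Xp k (b + 1 + 1) n * YgN k 0) := by rw [mul_assoc]
      _ = XgN k (b + 1) * (YgN k 0 * MM k (b + 1) n) := by
          rw [ChainF k n (b + 1) (by omega)]
      _ = (XgN k (b + 1) * YgN k 0) * MM k (b + 1) n := by rw [mul_assoc]
      _ = YgN k 0 * (RR k b * XgN k (b + 1)) * MM k (b + 1) n := by
          rw [FactE k b (by omega)]
      _ = YgN k 0 * (RR k b * XgN k (b + 1) * MM k (b + 1) n) := by
          simp only [mul_assoc]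

lemma MM_snoc (k : ℕ) : ∀ n b,
    MM k b (n + 1) = MM k b n * (RR k (b + n) * XgN k (b + n + 1))
  | 0, b => by simp [MM]
  | n + 1, b => by
    calc MM k b (n + 1 + 1)
        = RR k b * XgN k (b + 1) * MM k (b + 1) (n + 1) := rfl
      _ = RR k b * XgN k (b + 1) *
            (MM k (b + 1) n * (RR k (b + 1 + n) * XgN k (b + 1 + n + 1))) := by
          rw [MM_snoc k n (b + 1)]
      _ = (RR k b * XgN k (b + 1) * MM k (b + 1) n) *
            (RR k (b + 1 + n) * XgN k (b + 1 + n + 1)) := by simp only [mul_assoc]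
      _ = MM k b (n + 1) * (RR k (b + (n + 1)) * XgN k (b + (n + 1) + 1)) := by
          rw [(show b + 1 + n = b + (n + 1) by omega)]; rfl

/-- The pure Hecke-algebra commutation `(X's) * R = K * (X's)`. -/
lemma Ddagger (k : ℕ) : ∀ n, n < k - 1 → Xp k 1 n * RR k n = Kn k n * Xp k 1 n
  | 0, _ => by simp [Xp, Kn, DescTp, DescT, RR, mul_assoc]
  | n + 1, h => by
    have h1 : n + 1 < k - 1 := h
    have hsnoc : Xp k 1 (n + 1) = Xp k 1 n * XgN k (n + 1) := by
      rw [Xp_snoc k n 1, (show 1 + n = n + 1 by omega)]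
    calc Xp k 1 (n + 1) * RR k (n + 1)
        = Xp k 1 n * XgN k (n + 1) * (TpN k (n + 1) * RR k n * TgN k (n + 1)) := by
          rw [hsnoc, RR]
      _ = Xp k 1 n * (XgN k (n + 1) * TpN k (n + 1)) * RR k n * TgN k (n + 1) := by
          simp only [mul_assoc]
      _ = Xp k 1 n * (TgN k (n + 1) * XgN k (n + 1 + 1)) * RR k n * TgN k (n + 1) := by
          rw [XTp k (n + 1) h1]
      _ = Xp k 1 n * TgN k (n + 1) * (XgN k (n + 1 + 1) * RR k n) * TgN k (n + 1) := by
          simp only [mul_assoc]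
      _ = Xp k 1 n * TgN k (n + 1) * (RR k n * XgN k (n + 1 + 1)) * TgN k (n + 1) := by
          rw [X_comm_RR k n (n + 1 + 1) (by omega)]
      _ = Xp k 1 n * TgN k (n + 1) * RR k n * (XgN k (n + 1 + 1) * TgN k (n + 1)) := by
          simp only [mul_assoc]
      _ = TgN k (n + 1) * (Xp k 1 n * RR k n) * (XgN k (n + 1 + 1) * TgN k (n + 1)) := by
          rw [Xp_comm_T k n 1 (n + 1) (by omega)]; simp only [mul_assoc]
      _ = TgN k (n + 1) * (Kn k n * Xp k 1 n) * (XgN k (n + 1 + 1) * TgN k (n + 1)) := by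
          rw [Ddagger k n (by omega)]
      _ = TgN k (n + 1) * (Kn k n * Xp k 1 n) * (TpN k (n + 1) * XgN k (n + 1)) := by
          rw [← TpX k (n + 1) h1]
      _ = TgN k (n + 1) * Kn k n * (Xp k 1 n * TpN k (n + 1)) * XgN k (n + 1) := by
          simp only [mul_assoc]
      _ = TgN k (n + 1) * Kn k n * (TpN k (n + 1) * Xp k 1 n) * XgN k (n + 1) := by
          rw [Xp_comm_Tp k n 1 (n + 1) (by omega)]
      _ = (TgN k (n + 1) * Kn k n * TpN k (n + 1)) * (Xp k 1 n * XgN k (n + 1)) := by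
          simp only [mul_assoc]
      _ = Kn k (n + 1) * Xp k 1 (n + 1) := by rw [Kn_step k n h1, hsnoc]

/-- The pure identity `M = C * (X's)`. -/
lemma PURE (k : ℕ) : ∀ n, n ≤ k - 1 → MM k 0 n = Cpal k n * Xp k 1 n
  | 0, _ => by simp [MM, Cpal, AscT, DescT, Xp]
  | n + 1, h => by
    have hsnoc : Xp k 1 (n + 1) = Xp k 1 n * XgN k (n + 1) := by
      rw [Xp_snoc k n 1, (show 1 + n = n + 1 by omega)]
    calc MM k 0 (n + 1)
        = MM k 0 n * (RR k (0 + n) * XgN k (0 + n + 1)) := MM_snoc k n 0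
      _ = Cpal k n * Xp k 1 n * (RR k n * XgN k (n + 1)) := by
          rw [PURE k n (by omega), (show (0 : ℕ) + n = n by omega)]
      _ = Cpal k n * (Xp k 1 n * RR k n) * XgN k (n + 1) := by simp only [mul_assoc]
      _ = Cpal k n * (Kn k n * Xp k 1 n) * XgN k (n + 1) := by
          rw [Ddagger k n (by omega)]
      _ = (Cpal k n * Kn k n) * (Xp k 1 n * XgN k (n + 1)) := by simp only [mul_assoc]
      _ = Cpal k (n + 1) * Xp k 1 (n + 1) := by rw [Cpal_Kn, hsnoc]

/-! #### Conversions of list products -/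

lemma prod_range_X (k : ℕ) : ∀ n, ((List.range n).map (XgN k)).prod = Xp k 0 n
  | 0 => by simp [Xp]
  | n + 1 => by
    rw [List.range_succ, List.map_append, List.prod_append, prod_range_X k n,
      Xp_snoc k n 0]
    simp

lemma prodX_fin (k : ℕ) :
    ((List.finRange k).map (fun j : Fin k => dgen (DGen.X j))).prod = Xp k 0 k := by
  have hfun : (fun j : Fin k => dgen (DGen.X j)) = XgN k ∘ Fin.val := by
    funext j
    simp only [Function.comp_apply]
    unfold XgN
    rw [dif_pos j.2]
  rw [hfun, ← List.map_map, (show List.map Fin.val (List.finRange k) = List.range k from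
    List.ext_getElem (by simp) (by simp)), prod_range_X]

lemma detRel (k : ℕ) (h0 : 0 < k) :
    YgN k 0 * Xp k 0 k = qA k * (Xp k 0 k * YgN k 0) := by
  have h := rel (k := k) (DRel.det ⟨0, h0⟩ rfl)
  simp only [map_mul, map_list_prod, List.map_map, AlgHom.commutes] at h
  have hcomp : ((⇑(RingQuot.mkAlgHom K2 (DRel k))) ∘ fun j : Fin k =>
      FreeAlgebra.ι K2 (DGen.X j)) = (fun j : Fin k => dgen (DGen.X j)) := rfl
  rw [hcomp, prodX_fin] at h
  simp only [mul_assoc] at h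
  have hY : YgN k 0 = dgen (DGen.Y ⟨0, h0⟩) := dif_pos h0
  rw [hY]
  exact h

/-- The main computation. -/
lemma main0 (k : ℕ) (hk : 2 ≤ k) :
    YgN k 0 * XgN k 0 = qA k * (XgN k 0 * (YgN k 0 * Cpal k (k - 1))) := by
  have h0 : 0 < k := by omega
  have hk1 : k - 1 + 1 = k := by omega
  have hsplit : XgN k 0 * Xp k 1 (k - 1) = Xp k 0 k := by
    calc XgN k 0 * Xp k 1 (k - 1) = Xp k 0 (k - 1 + 1) := rfl
      _ = Xp k 0 k := by rw [hk1]
  have hchain : Xp k 1 (k - 1) * YgN k 0 = YgN k 0 * MM k 0 (k - 1) :=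
    ChainF k (k - 1) 0 (by omega)
  have hpure : MM k 0 (k - 1) = Cpal k (k - 1) * Xp k 1 (k - 1) := PURE k (k - 1) le_rfl
  have hdet := detRel k h0
  have hZ : Xp k 1 (k - 1) * XpI k 1 (k - 1) = 1 := Xp_XpI k (k - 1) 1
  calc YgN k 0 * XgN k 0
      = YgN k 0 * XgN k 0 * (Xp k 1 (k - 1) * XpI k 1 (k - 1)) := by rw [hZ, mul_one]
    _ = YgN k 0 * (XgN k 0 * Xp k 1 (k - 1)) * XpI k 1 (k - 1) := by
        simp only [mul_assoc]
    _ = YgN k 0 * Xp k 0 k * XpI k 1 (k - 1) := by rw [hsplit]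
    _ = qA k * (Xp k 0 k * YgN k 0) * XpI k 1 (k - 1) := by rw [hdet]
    _ = qA k * (XgN k 0 * (Xp k 1 (k - 1) * YgN k 0)) * XpI k 1 (k - 1) := by
        rw [← hsplit]; simp only [mul_assoc]
    _ = qA k * (XgN k 0 * (YgN k 0 * (Cpal k (k - 1) * Xp k 1 (k - 1)))) *
          XpI k 1 (k - 1) := by rw [hchain, hpure]
    _ = qA k * (XgN k 0 * (YgN k 0 * Cpal k (k - 1))) *
          (Xp k 1 (k - 1) * XpI k 1 (k - 1)) := by simp only [mul_assoc]
    _ = qA k * (XgN k 0 * (YgN k 0 * Cpal k (k - 1))) := by rw [hZ, mul_one]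

/-! #### The second form of the palindromic element -/

lemma Cpal_sum (k : ℕ) : ∀ n, n ≤ k - 1 →
    Cpal k n = 1 + hA k * ∑ m ∈ Finset.range n, AscT k (m + 1) * DescT k m
  | 0, _ => by simp [Cpal, AscT, DescT]
  | n + 1, h => by
    have hn : n < k - 1 := by omega
    calc Cpal k (n + 1)
        = AscT k n * TgN k n * (TgN k n * DescT k n) := rfl
      _ = AscT k n * (TgN k n * TgN k n) * DescT k n := by simp only [mul_assoc]
      _ = AscT k n * (1 + hA k * TgN k n) * DescT k n := by rw [Tsq k n hn]
      _ = AscT k n * DescT k n + AscT k n * (hA k * TgN k n) * DescT k n := by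
          rw [mul_add, add_mul, mul_one]
      _ = Cpal k n + hA k * (AscT k (n + 1) * DescT k n) := by
          rw [Cpal]
          congr 1
          calc AscT k n * (hA k * TgN k n) * DescT k n
              = AscT k n * hA k * TgN k n * DescT k n := by simp only [mul_assoc]
            _ = hA k * AscT k n * TgN k n * DescT k n := by rw [central_h]
            _ = hA k * (AscT k n * TgN k n * DescT k n) := by simp only [mul_assoc]
            _ = hA k * (AscT k (n + 1) * DescT k n) := rfl
      _ = 1 + hA k * ∑ m ∈ Finset.range n, AscT k (m + 1) * DescT k m +
            hA k * (AscT k (n + 1) * DescT k n) := by rw [Cpal_sum k n (by omega)]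
      _ = 1 + hA k * ∑ m ∈ Finset.range (n + 1), AscT k (m + 1) * DescT k m := by
          rw [Finset.sum_range_succ, mul_add, add_assoc]

lemma prod_range_T (k : ℕ) : ∀ n, ((List.range n).map (TgN k)).prod = AscT k n
  | 0 => by simp [AscT]
  | n + 1 => by
    rw [List.range_succ, List.map_append, List.prod_append, prod_range_T k n]
    simp [AscT]

lemma prod_rev_range_T (k : ℕ) :
    ∀ n, (((List.range n).reverse).map (TgN k)).prod = DescT k n
  | 0 => by simp [DescT]
  | n + 1 => by
    rw [List.range_succ, List.reverse_append, List.map_append, List.prod_append,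
      prod_rev_range_T k n]
    simp [DescT]

end DAHAAux

/-- In `H_k` (`k ≥ 2`): `Y₁X₁ = q·X₁Y₁·T₁T₂⋯T_{k−2}T_{k−1}²T_{k−2}⋯T₂T₁`, and equivalently
`Y₁X₁ = q·X₁Y₁·(1 + h·∑_{i=1}^{k−1} T₁⋯T_{i−1}T_iT_{i−1}⋯T₁)`.  In the 0-based encoding,
the long palindrome with the squared middle is the product over the index list
`[0, …, k−2] ++ [k−2, …, 0]`, and the palindrome `T₁⋯T_{i−1}T_iT_{i−1}⋯T₁` for paper index
`i = m + 1` is the product over `[0, …, m] ++ [m−1, …, 0]`. -/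
theorem statement6 (k : ℕ) (hk : 2 ≤ k) :
    (YgN k 0 * XgN k 0 =
        algebraMap K2 (Hk k) qvar * (XgN k 0 * YgN k 0) *
          (((List.range (k - 1) ++ (List.range (k - 1)).reverse).map (TgN k)).prod)) ∧
    (YgN k 0 * XgN k 0 =
        algebraMap K2 (Hk k) qvar * (XgN k 0 * YgN k 0) *
          (1 + algebraMap K2 (Hk k) hvar *
            ∑ m ∈ Finset.range (k - 1),
              (((List.range (m + 1) ++ (List.range m).reverse).map (TgN k)).prod))) := by
  have hmain := DAHAAux.main0 k hk
  constructor
  · rw [List.map_append, List.prod_append, DAHAAux.prod_range_T, DAHAAux.prod_rev_range_T,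
      hmain, ← DAHAAux.Cpal]
    simp only [mul_assoc]
  · have hsum : ∑ m ∈ Finset.range (k - 1),
        (((List.range (m + 1) ++ (List.range m).reverse).map (TgN k)).prod) =
        ∑ m ∈ Finset.range (k - 1), DAHAAux.AscT k (m + 1) * DAHAAux.DescT k m :=
      Finset.sum_congr rfl fun m _ => by
        rw [List.map_append, List.prod_append, DAHAAux.prod_range_T,
          DAHAAux.prod_rev_range_T]
    rw [hmain, DAHAAux.Cpal_sum k (k - 1) le_rfl, hsum]
    simp only [mul_assoc]

end
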